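/- Let K ⊆ ℝ^(n+m) be a compact regular partially convex set. Then the space of partially affine polynomials (polynomials of the form p(x,y) = c₀(y) + Σᵢ cᵢ(y)xᵢ with polynomial coefficients cᵢ) is dense in the space of continuous partially affine functions on K with respect to the supremum norm. -/

import Mathlib

open Filter Metric Set Topology

theorem aux_rep {n : ℕ} (C : Set (Fin n → ℝ)) (hC : Convex ℝ C) (g : (Fin n → ℝ) → ℝ)
    (hg : ∀ x₁ ∈ C, ∀ x₂ ∈ C, ∀ t ∈ Set.Icc (0:ℝ) 1,
      g (t • x₁ + (1 - t) • x₂) = t * g x₁ + (1 - t) * g x₂)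
    (x₀ : Fin n → ℝ) (δ : ℝ) (hδ : 0 < δ) (hball : Metric.closedBall x₀ δ ⊆ C)
    (x : Fin n → ℝ) (hx : x ∈ C) :
    g x = (g x₀ - ∑ i, ((g (x₀ + δ • (Pi.single i 1 : Fin n → ℝ)) - g x₀) / δ) * x₀ i)
      + ∑ i, ((g (x₀ + δ • (Pi.single i 1 : Fin n → ℝ)) - g x₀) / δ) * x i := by
  classical
  set e : Fin n → (Fin n → ℝ) := fun i => (Pi.single i 1 : Fin n → ℝ) with he
  set ci : Fin n → ℝ := fun i => (g (x₀ + δ • e i) - g x₀) / δ with hci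
  set h : (Fin n → ℝ) → ℝ := fun z => g z - (g x₀ + ∑ i, ci i * (z i - x₀ i)) with hh
  have hsingle_sum : ∀ (u : Fin n → ℝ) (j : Fin n), ∑ i, u i * e i j = u j := by
    intro u j
    rw [Finset.sum_eq_single j]
    · simp [he]
    · intro i _ hij
      simp [he, Pi.single_eq_of_ne (Ne.symm hij)]
    · simp
  have hsingle_sum' : ∀ (u : Fin n → ℝ) (i : Fin n), ∑ j, u j * e i j = u i := by
    intro u i
    rw [Finset.sum_eq_single i]
    · simp [he]
    · intro j _ hij
      simp [he, Pi.single_eq_of_ne hij]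
    · simp
  have hmem_ball : ∀ (s : ℝ) (i : Fin n), |s| ≤ δ → x₀ + s • e i ∈ Metric.closedBall x₀ δ := by
    intro s i hs
    have h1 : ‖e i‖ = 1 := by
      simp [he, Pi.norm_single]
    rw [Metric.mem_closedBall, dist_eq_norm, add_sub_cancel_left, norm_smul, h1, mul_one]
    exact hs
  have hx₀C : x₀ ∈ C := hball (Metric.mem_closedBall_self hδ.le)
  have hhaff : ∀ x₁ ∈ C, ∀ x₂ ∈ C, ∀ t ∈ Set.Icc (0:ℝ) 1,
      h (t • x₁ + (1 - t) • x₂) = t * h x₁ + (1 - t) * h x₂ := by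
    intro a ha b hb t ht
    simp only [hh]
    rw [hg a ha b hb t ht]
    have hsum : ∑ i, ci i * ((t • a + (1 - t) • b) i - x₀ i)
        = t * ∑ i, ci i * (a i - x₀ i) + (1 - t) * ∑ i, ci i * (b i - x₀ i) := by
      rw [Finset.mul_sum, Finset.mul_sum, ← Finset.sum_add_distrib]
      refine Finset.sum_congr rfl fun i _ => ?_
      simp only [Pi.add_apply, Pi.smul_apply, smul_eq_mul]
      ring
    rw [hsum]; ring
  have hhx₀ : h x₀ = 0 := by simp [hh]
  have hhe : ∀ i, h (x₀ + δ • e i) = 0 := by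
    intro i
    simp only [hh]
    have hsum : ∑ j, ci j * ((x₀ + δ • e i) j - x₀ j) = δ * ci i := by
      have h2 : ∀ j, ci j * ((x₀ + δ • e i) j - x₀ j) = (fun j => δ * ci j) j * e i j := by
        intro j
        simp only [Pi.add_apply, Pi.smul_apply, smul_eq_mul]
        ring
      rw [Finset.sum_congr rfl fun j _ => h2 j, hsingle_sum' (fun j => δ * ci j) i]
    rw [hsum]
    have : ci i = (g (x₀ + δ • e i) - g x₀) / δ := by rw [hci]
    rw [this]
    field_simp
    ring
  have hax : ∀ (i : Fin n) (s : ℝ), |s| ≤ δ → h (x₀ + s • e i) = 0 := by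
    have hpos : ∀ (i : Fin n) (s : ℝ), s ∈ Set.Icc (0:ℝ) δ → h (x₀ + s • e i) = 0 := by
      intro i s hs
      have ht : s / δ ∈ Set.Icc (0:ℝ) 1 := ⟨div_nonneg hs.1 hδ.le, (div_le_one hδ).2 hs.2⟩
      have heq : x₀ + s • e i = (s/δ) • (x₀ + δ • e i) + (1 - s/δ) • x₀ := by
        funext j
        simp only [Pi.add_apply, Pi.smul_apply, smul_eq_mul]
        field_simp
        ring
      have habs : |δ| ≤ δ := by rw [abs_of_pos hδ]
      have := hhaff _ (hball (hmem_ball δ i habs)) _ hx₀C (s/δ) ht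
      rw [← heq, hhe i, hhx₀] at this
      rw [this]; ring
    intro i s hs
    rcases le_or_gt 0 s with h0 | h0
    · exact hpos i s ⟨h0, (abs_of_nonneg h0) ▸ hs⟩
    · have hsneg : -s ∈ Set.Icc (0:ℝ) δ := ⟨by linarith, by rw [abs_of_neg h0] at hs; linarith⟩
      have h1 : h (x₀ + (-s) • e i) = 0 := hpos i (-s) hsneg
      have hmem1 : x₀ + s • e i ∈ C := hball (hmem_ball s i hs)
      have hmem2 : x₀ + (-s) • e i ∈ C := hball (hmem_ball (-s) i (by rwa [abs_neg]))
      have heq : x₀ = (1/2 : ℝ) • (x₀ + s • e i) + (1 - 1/2 : ℝ) • (x₀ + (-s) • e i) := by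
        funext j
        simp only [Pi.add_apply, Pi.smul_apply, smul_eq_mul]
        ring
      have := hhaff _ hmem1 _ hmem2 (1/2) ⟨by norm_num, by norm_num⟩
      rw [← heq, hhx₀, h1] at this
      norm_num at this
      linarith
  have hcx : ConvexOn ℝ C h := by
    refine ⟨hC, fun a ha b hb p q hp hq hpq => ?_⟩
    have hq' : q = 1 - p := by linarith
    subst hq'
    exact le_of_eq (hhaff a ha b hb p ⟨hp, by linarith⟩)
  have hcv : ConcaveOn ℝ C h := by
    refine ⟨hC, fun a ha b hb p q hp hq hpq => ?_⟩
    have hq' : q = 1 - p := by linarith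
    subst hq'
    exact ge_of_eq (hhaff a ha b hb p ⟨hp, by linarith⟩)
  have hball2 : ∀ v : Fin n → ℝ, ‖v‖ ≤ δ / (n+1) → h (x₀ + v) = 0 := by
    intro v hv
    have hpos : (0:ℝ) < (n:ℝ) + 1 := by positivity
    set w : Option (Fin n) → ℝ := fun _ => ((n:ℝ)+1)⁻¹ with hw
    set p : Option (Fin n) → (Fin n → ℝ) :=
      fun o => o.elim x₀ (fun i => x₀ + (((n:ℝ)+1) * v i) • e i) with hp
    have hwnn : ∀ o ∈ Finset.univ, 0 ≤ w o := fun o _ => by positivity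
    have hwsum : ∑ o : Option (Fin n), w o = 1 := by
      simp only [hw, Finset.sum_const, Finset.card_univ, Fintype.card_option, Fintype.card_fin,
        nsmul_eq_mul]
      push_cast
      field_simp
    have habsi : ∀ i : Fin n, |((n:ℝ)+1) * v i| ≤ δ := by
      intro i
      have h1 : |v i| ≤ ‖v‖ := by
        calc |v i| = ‖v i‖ := rfl
        _ ≤ ‖v‖ := norm_le_pi_norm v i
      rw [abs_mul, abs_of_pos hpos]
      calc ((n:ℝ)+1) * |v i| ≤ ((n:ℝ)+1) * (δ / ((n:ℝ)+1)) := by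
            apply mul_le_mul_of_nonneg_left (h1.trans hv) hpos.le
        _ = δ := by field_simp
    have hmemp : ∀ o ∈ Finset.univ, p o ∈ C := by
      intro o _
      match o with
      | none => exact hx₀C
      | some i => exact hball (hmem_ball _ i (habsi i))
    have hx₀v : x₀ + v = ∑ o : Option (Fin n), w o • p o := by
      funext j
      rw [Finset.sum_apply]
      rw [Fintype.sum_option]
      simp only [hw, hp, Option.elim, Pi.smul_apply, Pi.add_apply, smul_eq_mul]
      have hs : ∑ i : Fin n, ((n:ℝ)+1)⁻¹ * (x₀ j + ((n:ℝ)+1) * v i * e i j)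
          = (n:ℝ) * (((n:ℝ)+1)⁻¹ * x₀ j) + v j := by
        rw [Finset.sum_congr rfl (fun i _ => by ring :
          ∀ i ∈ Finset.univ, ((n:ℝ)+1)⁻¹ * (x₀ j + ((n:ℝ)+1) * v i * e i j)
            = ((n:ℝ)+1)⁻¹ * x₀ j + (((n:ℝ)+1)⁻¹ * (((n:ℝ)+1))) * (v i * e i j))]
        rw [Finset.sum_add_distrib, Finset.sum_const, Finset.card_univ, Fintype.card_fin,
          ← Finset.mul_sum, hsingle_sum v j, nsmul_eq_mul]
        have : ((n:ℝ)+1)⁻¹ * ((n:ℝ)+1) = 1 := by field_simp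
        rw [this, one_mul]
      rw [hs]
      field_simp
      ring
    have hle := hcx.map_sum_le hwnn hwsum hmemp
    have hge := hcv.le_map_sum hwnn hwsum hmemp
    rw [← hx₀v] at hle hge
    simp only [smul_eq_mul] at hle hge
    have hzero : ∑ o : Option (Fin n), w o * h (p o) = 0 := by
      apply Finset.sum_eq_zero
      intro o _
      match o with
      | none => simp [hp, Option.elim, hhx₀]
      | some i =>
        have := hax i (((n:ℝ)+1) * v i) (habsi i)
        simp only [hp, Option.elim]
        rw [this, mul_zero]
    rw [hzero] at hle hge
    linarith
  suffices hzero : h x = 0 by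
    have hsplit : ∑ i, ci i * (x i - x₀ i) = ∑ i, ci i * x i - ∑ i, ci i * x₀ i := by
      rw [← Finset.sum_sub_distrib]
      exact Finset.sum_congr rfl fun i _ => by ring
    simp only [hh] at hzero
    rw [hsplit] at hzero
    linarith
  rcases eq_or_ne x x₀ with rfl | hne
  · exact hhx₀
  · set u : Fin n → ℝ := x - x₀ with hu
    have hu0 : u ≠ 0 := sub_ne_zero.2 hne
    have hun : 0 < ‖u‖ := norm_pos_iff.2 hu0
    set s : ℝ := δ / (((n:ℝ)+1) * ‖u‖) with hs
    have hspos : 0 < s := by positivity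
    have hpos1 : (0:ℝ) < (n:ℝ)+1 := by positivity
    have hnorm : ‖(-s) • u‖ = δ / ((n:ℝ)+1) := by
      rw [norm_smul, Real.norm_eq_abs, abs_neg, abs_of_pos hspos, hs]
      field_simp
    have h1 : h (x₀ - s • u) = 0 := by
      have heq : x₀ - s • u = x₀ + (-s) • u := by
        rw [neg_smul, ← sub_eq_add_neg]
      rw [heq]
      exact hball2 _ (le_of_eq hnorm)
    have hnorm' : ‖s • u‖ = δ / ((n:ℝ)+1) := by
      rw [← norm_neg, ← neg_smul]
      exact hnorm
    have hmem1 : x₀ - s • u ∈ C := by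
      apply hball
      rw [Metric.mem_closedBall, dist_eq_norm, sub_sub_cancel_left, norm_neg, hnorm']
      exact div_le_self hδ.le (by linarith)
    set t : ℝ := s / (1 + s) with htdef
    have h1s : (0:ℝ) < 1 + s := by linarith
    have ht0 : 0 < t := by positivity
    have ht1 : t ≤ 1 := by
      rw [htdef, div_le_one h1s]
      linarith
    have hcomb : x₀ = t • x + (1 - t) • (x₀ - s • u) := by
      funext j
      simp only [Pi.smul_apply, Pi.sub_apply, Pi.add_apply, smul_eq_mul, hu]
      rw [htdef]
      field_simp
      ring
    have haux := hhaff x hx (x₀ - s • u) hmem1 t ⟨ht0.le, ht1⟩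
    rw [← hcomb, hhx₀, h1, mul_zero, add_zero] at haux
    have hxz : t * h x = 0 := haux.symm
    rcases mul_eq_zero.1 hxz with h' | h'
    · exact absurd h' ht0.ne'
    · exact h'

theorem stmt_9 (n m : ℕ) (K : Set ((Fin n → ℝ) × (Fin m → ℝ)))
    (hKc : IsCompact K) (hKcl : IsClosed K)
    (hconv : ∀ y : Fin m → ℝ, Convex ℝ {x : Fin n → ℝ | (x, y) ∈ K})
    (Y : Set (Fin m → ℝ)) (hY : Y = Prod.snd '' K)
    (hint : ∀ y ∈ Y, (interior {x : Fin n → ℝ | (x, y) ∈ K}).Nonempty)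
    (hlhc : ∀ y ∈ Y, ∀ yk : ℕ → (Fin m → ℝ), (∀ k, yk k ∈ Y) →
      Filter.Tendsto yk Filter.atTop (nhds y) →
      ∀ x ∈ interior {x : Fin n → ℝ | (x, y) ∈ K},
        ∃ xk : ℕ → (Fin n → ℝ),
          (∀ k, xk k ∈ interior {x : Fin n → ℝ | (x, yk k) ∈ K}) ∧
          Filter.Tendsto xk Filter.atTop (nhds x))
    (f : (Fin n → ℝ) × (Fin m → ℝ) → ℝ) (hf : ContinuousOn f K)
    (haff : ∀ (y : Fin m → ℝ) (x₁ x₂ : Fin n → ℝ), (x₁, y) ∈ K → (x₂, y) ∈ K →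
      ∀ t ∈ Set.Icc (0:ℝ) 1,
        f (t • x₁ + (1 - t) • x₂, y) = t * f (x₁, y) + (1 - t) * f (x₂, y))
    (ε : ℝ) (hε : 0 < ε) :
    ∃ (c₀ : MvPolynomial (Fin m) ℝ) (c : Fin n → MvPolynomial (Fin m) ℝ),
      ∀ p ∈ K,
        |f p - (MvPolynomial.eval p.2 c₀ +
          ∑ i, MvPolynomial.eval p.2 (c i) * p.1 i)| < ε := by
  classical
  set slice : (Fin m → ℝ) → Set (Fin n → ℝ) := fun y => {x : Fin n → ℝ | (x, y) ∈ K} with hslice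
  have hYc : IsCompact Y := hY ▸ (hKc.image continuous_snd)
  -- choose centers and radii
  have h0 : ∀ y : Fin m → ℝ, ∃ (x₀ : Fin n → ℝ) (δ : ℝ), 0 < δ ∧
      (y ∈ Y → Metric.closedBall x₀ δ ⊆ interior (slice y)) := by
    intro y
    by_cases hy : y ∈ Y
    · obtain ⟨x', hx'⟩ := hint y hy
      obtain ⟨r, hr, hrball⟩ := Metric.isOpen_iff.1 isOpen_interior x' hx'
      exact ⟨x', r/2, by linarith, fun _ =>
        (Metric.closedBall_subset_ball (by linarith)).trans hrball⟩
    · exact ⟨0, 1, one_pos, fun h => absurd h hy⟩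
  choose x₀ δ hδpos hball using h0
  set e : Fin n → (Fin n → ℝ) := fun i => (Pi.single i 1 : Fin n → ℝ) with he
  set c : Fin n → (Fin m → ℝ) → ℝ :=
    fun i y => (f (x₀ y + δ y • e i, y) - f (x₀ y, y)) / δ y with hc
  set c0 : (Fin m → ℝ) → ℝ := fun y => f (x₀ y, y) - ∑ i, c i y * x₀ y i with hc0
  have hrep : ∀ y ∈ Y, ∀ x : Fin n → ℝ, (x, y) ∈ K →
      f (x, y) = c0 y + ∑ i, c i y * x i := by
    intro y hy x hx
    have := aux_rep (slice y) (hconv y) (fun x => f (x, y))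
      (fun x₁ h1 x₂ h2 t ht => haff y x₁ x₂ h1 h2 t ht)
      (x₀ y) (δ y) (hδpos y) ((hball y hy).trans interior_subset) x hx
    simpa [hc, hc0, he] using this
  have hkey : ∀ y ∈ Y, ∀ yk : ℕ → (Fin m → ℝ), (∀ k, yk k ∈ Y) →
      Tendsto yk atTop (𝓝 y) →
      Tendsto (fun k => c0 (yk k)) atTop (𝓝 (c0 y)) ∧
      ∀ i, Tendsto (fun k => c i (yk k)) atTop (𝓝 (c i y)) := by
    intro y hy yk hykY hyk
    have hx₀int : x₀ y ∈ interior (slice y) :=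
      hball y hy (Metric.mem_closedBall_self (hδpos y).le)
    have hqint : ∀ i, x₀ y + δ y • e i ∈ interior (slice y) := by
      intro i
      apply hball y hy
      rw [Metric.mem_closedBall, dist_eq_norm, add_sub_cancel_left, norm_smul,
        Real.norm_eq_abs, abs_of_pos (hδpos y)]
      simp [he, Pi.norm_single]
    obtain ⟨z0, hz0int, hz0t⟩ := hlhc y hy yk hykY hyk (x₀ y) hx₀int
    choose z hzint hzt using fun i => hlhc y hy yk hykY hyk (x₀ y + δ y • e i) (hqint i)
    have hz0K : ∀ k, (z0 k, yk k) ∈ K := fun k => by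
      have := interior_subset (hz0int k); exact this
    have hzK : ∀ i k, (z i k, yk k) ∈ K := fun i k => by
      have := interior_subset (hzint i k); exact this
    have hqK : ∀ i, (x₀ y + δ y • e i, y) ∈ K := fun i => by
      have := interior_subset (hqint i); exact this
    have hx₀K : (x₀ y, y) ∈ K := by
      have := interior_subset hx₀int; exact this
    have hfc : ∀ (w : ℕ → Fin n → ℝ) (wlim : Fin n → ℝ), (∀ k, (w k, yk k) ∈ K) →
        ((wlim, y) ∈ K) → Tendsto w atTop (𝓝 wlim) →
        Tendsto (fun k => f (w k, yk k)) atTop (𝓝 (f (wlim, y))) := by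
      intro w wlim hwK hwlimK hwt
      have h1 : Tendsto (fun k => ((w k, yk k) : (Fin n → ℝ) × (Fin m → ℝ)))
          atTop (nhdsWithin (wlim, y) K) := by
        apply tendsto_nhdsWithin_of_tendsto_nhds_of_eventually_within
        · exact hwt.prodMk_nhds hyk
        · exact Eventually.of_forall hwK
      exact ((hf (wlim, y) hwlimK).tendsto).comp h1
    set M : ℕ → Matrix (Fin n) (Fin n) ℝ :=
      fun k => Matrix.of (fun i j => z i k j - z0 k j) with hM
    set b : ℕ → (Fin n → ℝ) := fun k i => f (z i k, yk k) - f (z0 k, yk k) with hb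
    set V : ℕ → (Fin n → ℝ) := fun k j => c j (yk k) with hVdef
    have hMV : ∀ k, (M k).mulVec (V k) = b k := by
      intro k
      funext i
      simp only [Matrix.mulVec, dotProduct, hM, hb, hVdef, Matrix.of_apply]
      rw [hrep (yk k) (hykY k) (z i k) (hzK i k), hrep (yk k) (hykY k) (z0 k) (hz0K k)]
      have h2 : ∀ j, (z i k j - z0 k j) * c j (yk k)
          = c j (yk k) * z i k j - c j (yk k) * z0 k j := fun j => by ring
      rw [Finset.sum_congr rfl fun j _ => h2 j, Finset.sum_sub_distrib]
      ring
    have hMt : Tendsto M atTop (𝓝 (δ y • (1 : Matrix (Fin n) (Fin n) ℝ))) := by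
      apply tendsto_pi_nhds.2
      intro i
      apply tendsto_pi_nhds.2
      intro j
      have h1 := ((tendsto_pi_nhds.1 (hzt i) j).sub (tendsto_pi_nhds.1 hz0t j))
      have h2 : (x₀ y + δ y • e i) j - x₀ y j = (δ y • (1 : Matrix (Fin n) (Fin n) ℝ)) i j := by
        simp only [Pi.add_apply, Pi.smul_apply, smul_eq_mul, add_sub_cancel_left,
          Matrix.smul_apply, Matrix.one_apply, he]
        by_cases hij : i = j
        · subst hij; simp
        · simp [Pi.single_eq_of_ne (Ne.symm hij), hij]
      rw [h2] at h1
      exact h1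
    have hdetlim : Tendsto (fun k => (M k).det) atTop
        (𝓝 ((δ y • (1 : Matrix (Fin n) (Fin n) ℝ)).det)) :=
      ((Continuous.matrix_det continuous_id).tendsto _).comp hMt
    have hdet1 : (δ y • (1 : Matrix (Fin n) (Fin n) ℝ)).det = (δ y)^n := by
      simp [Matrix.det_smul]
    have hdetne : (δ y)^n ≠ 0 := pow_ne_zero _ (hδpos y).ne'
    have hevdet : ∀ᶠ k in atTop, (M k).det ≠ 0 := by
      rw [hdet1] at hdetlim
      exact hdetlim.eventually_ne hdetne
    have hinv_cont : ContinuousAt Inv.inv (δ y • (1 : Matrix (Fin n) (Fin n) ℝ)) := by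
      apply continuousAt_matrix_inv
      rw [Ring.inverse_eq_inv', hdet1]
      exact continuousAt_inv₀ hdetne
    have hMinvt : Tendsto (fun k => (M k)⁻¹) atTop
        (𝓝 ((δ y • (1 : Matrix (Fin n) (Fin n) ℝ)))⁻¹) := hinv_cont.tendsto.comp hMt
    have hinv_eq : ((δ y • (1 : Matrix (Fin n) (Fin n) ℝ)))⁻¹
        = (δ y)⁻¹ • (1 : Matrix (Fin n) (Fin n) ℝ) := by
      apply Matrix.inv_eq_right_inv
      rw [Matrix.smul_mul, Matrix.mul_smul, smul_smul, mul_inv_cancel₀ (hδpos y).ne',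
        Matrix.one_mul, one_smul]
    have hbt : Tendsto b atTop (𝓝 (fun i => δ y * c i y)) := by
      apply tendsto_pi_nhds.2
      intro i
      have h1 := (hfc (z i) _ (hzK i) (hqK i) (hzt i)).sub (hfc z0 _ hz0K hx₀K hz0t)
      have h2 : f (x₀ y + δ y • e i, y) - f (x₀ y, y) = δ y * c i y := by
        rw [hc]
        exact (mul_div_cancel₀ _ (hδpos y).ne').symm
      rw [h2] at h1
      exact h1
    have hVev : ∀ᶠ k in atTop, V k = (M k)⁻¹.mulVec (b k) := by
      filter_upwards [hevdet] with k hk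
      rw [← hMV k, Matrix.mulVec_mulVec, Matrix.nonsing_inv_mul _ (isUnit_iff_ne_zero.2 hk),
        Matrix.one_mulVec]
    have hmulVec_cont : Continuous
        fun p : Matrix (Fin n) (Fin n) ℝ × (Fin n → ℝ) => p.1.mulVec p.2 :=
      continuous_fst.matrix_mulVec continuous_snd
    have hVt : Tendsto V atTop (𝓝 (fun j => c j y)) := by
      have h2 : Tendsto (fun k => ((M k)⁻¹, b k)) atTop
          (𝓝 (((δ y • (1 : Matrix (Fin n) (Fin n) ℝ)))⁻¹, fun i => δ y * c i y)) :=
        hMinvt.prodMk_nhds hbt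
      have h3 := (hmulVec_cont.tendsto _).comp h2
      have h4 : ((δ y • (1 : Matrix (Fin n) (Fin n) ℝ)))⁻¹.mulVec (fun i => δ y * c i y)
          = fun j => c j y := by
        rw [hinv_eq]
        funext j
        simp only [Matrix.mulVec, dotProduct, Matrix.smul_apply, Matrix.one_apply,
          smul_eq_mul]
        rw [Finset.sum_eq_single j]
        · rw [if_pos rfl]
          rw [mul_one, ← mul_assoc, inv_mul_cancel₀ (hδpos y).ne', one_mul]
        · intro i _ hij
          rw [if_neg (Ne.symm hij)]
          ring
        · simp
      refine Tendsto.congr' (hVev.mono fun k hk => hk.symm) ?_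
      rw [← h4]
      exact h3
    constructor
    · have hc0k : ∀ k, c0 (yk k) = f (z0 k, yk k) - ∑ j, c j (yk k) * z0 k j := by
        intro k
        have h1 := hrep (yk k) (hykY k) (z0 k) (hz0K k)
        linarith
      have h2 : Tendsto (fun k => f (z0 k, yk k) - ∑ j, c j (yk k) * z0 k j) atTop
          (𝓝 (f (x₀ y, y) - ∑ j, c j y * x₀ y j)) := by
        apply Tendsto.sub (hfc z0 _ hz0K hx₀K hz0t)
        apply tendsto_finset_sum
        intro j _
        exact (tendsto_pi_nhds.1 hVt j).mul (tendsto_pi_nhds.1 hz0t j)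
      have h3 : f (x₀ y, y) - ∑ j, c j y * x₀ y j = c0 y := by rw [hc0]
      rw [h3] at h2
      exact h2.congr fun k => (hc0k k).symm
    · intro i
      exact tendsto_pi_nhds.1 hVt i
  -- sequential criterion for continuity on Y
  have hseqcont : ∀ u : (Fin m → ℝ) → ℝ,
      (∀ y ∈ Y, ∀ yk : ℕ → (Fin m → ℝ), (∀ k, yk k ∈ Y) → Tendsto yk atTop (𝓝 y) →
        Tendsto (fun k => u (yk k)) atTop (𝓝 (u y))) → ContinuousOn u Y := by
    intro u hu y hy
    have : Tendsto u (𝓝[Y] y) (𝓝 (u y)) := by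
      apply tendsto_iff_seq_tendsto.2
      intro xk hxk
      have hxk1 : Tendsto xk atTop (𝓝 y) := hxk.mono_right nhdsWithin_le_nhds
      have hxk2 : ∀ᶠ k in atTop, xk k ∈ Y := hxk self_mem_nhdsWithin
      set yk' : ℕ → (Fin m → ℝ) := fun k => if xk k ∈ Y then xk k else y with hyk'
      have h1 : ∀ k, yk' k ∈ Y := by
        intro k
        by_cases h : xk k ∈ Y <;> simp [hyk', h, hy]
      have h2 : ∀ᶠ k in atTop, yk' k = xk k := hxk2.mono fun k hk => by simp [hyk', hk]
      have h3 : Tendsto yk' atTop (𝓝 y) := hxk1.congr' (h2.mono fun k hk => hk.symm)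
      have h4 := hu y hy yk' h1 h3
      refine h4.congr' (h2.mono fun k hk => ?_)
      simp only [Function.comp_apply]
      rw [hk]
    exact this
  have hc0cont : ContinuousOn c0 Y :=
    hseqcont c0 (fun y hy yk h1 h2 => (hkey y hy yk h1 h2).1)
  have hccont : ∀ i, ContinuousOn (c i) Y :=
    fun i => hseqcont (c i) (fun y hy yk h1 h2 => (hkey y hy yk h1 h2).2 i)
  -- Stone-Weierstrass on Y
  haveI : CompactSpace Y := isCompact_iff_compactSpace.mp hYc
  set coord : Fin m → C(Y, ℝ) :=
    fun j => ⟨fun y => (y : Fin m → ℝ) j, (continuous_apply j).comp continuous_subtype_val⟩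
    with hcoord
  have heval : ∀ (q : MvPolynomial (Fin m) ℝ) (zz : Y),
      (MvPolynomial.aeval coord q : C(Y, ℝ)) zz = MvPolynomial.eval (zz : Fin m → ℝ) q := by
    intro q zz
    induction q using MvPolynomial.induction_on with
    | C a => simp
    | add p q hp hq => simp [hp, hq]
    | mul_X p j hp =>
      simp [hp, hcoord]
      exact Or.inl hp
  have hsep : ((MvPolynomial.aeval coord : MvPolynomial (Fin m) ℝ →ₐ[ℝ] C(Y, ℝ)).range :
      Subalgebra ℝ C(Y, ℝ)).SeparatesPoints := by
    intro u v huv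
    have hne : (u : Fin m → ℝ) ≠ v := fun h => huv (Subtype.ext h)
    obtain ⟨j, hj⟩ := Function.ne_iff.1 hne
    refine ⟨_, ⟨⟨coord j, ⟨⟨MvPolynomial.X j, by simp⟩, rfl⟩⟩, ?_⟩⟩
    simpa [hcoord] using hj
  have happrox : ∀ u : (Fin m → ℝ) → ℝ, ContinuousOn u Y → ∀ d : ℝ, 0 < d →
      ∃ q : MvPolynomial (Fin m) ℝ, ∀ y ∈ Y, |u y - MvPolynomial.eval y q| < d := by
    intro u hu d hd
    obtain ⟨g, hg⟩ :=
      ContinuousMap.exists_mem_subalgebra_near_continuous_of_separatesPoints _ hsep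
        (Y.restrict u) (ContinuousOn.restrict hu) d hd
    obtain ⟨q, hq⟩ := (AlgHom.mem_range
      (MvPolynomial.aeval coord : MvPolynomial (Fin m) ℝ →ₐ[ℝ] C(Y, ℝ))).mp g.2
    refine ⟨q, fun y hy => ?_⟩
    have h1 := hg ⟨y, hy⟩
    have h2 : ((g : C(Y, ℝ)) : Y → ℝ) ⟨y, hy⟩ = MvPolynomial.eval y q := by
      rw [← hq]
      exact heval q ⟨y, hy⟩
    rw [Real.norm_eq_abs, h2] at h1
    calc |u y - MvPolynomial.eval y q| = |MvPolynomial.eval y q - u y| := abs_sub_comm _ _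
      _ < d := h1
  -- bound on the x-part of K
  obtain ⟨R0, hR0⟩ := hKc.isBounded.subset_closedBall 0
  set R : ℝ := max R0 1 with hR
  have hR1 : (1:ℝ) ≤ R := le_max_right _ _
  have hRpos : (0:ℝ) < R := lt_of_lt_of_le one_pos hR1
  have hRb : ∀ p ∈ K, ∀ i, |p.1 i| ≤ R := by
    intro p hp i
    have h1 : dist p 0 ≤ R0 := hR0 hp
    have h2 : |p.1 i| ≤ ‖p.1‖ := by
      calc |p.1 i| = ‖p.1 i‖ := rfl
        _ ≤ ‖p.1‖ := norm_le_pi_norm p.1 i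
    have h3 : ‖p.1‖ ≤ ‖p‖ := norm_fst_le p
    have h4 : ‖p‖ = dist p 0 := by rw [dist_zero_right]
    linarith [le_max_left R0 1]
  -- choose approximating polynomials
  set d : ℝ := ε / (2 * ((n:ℝ) + 1) * R) with hd
  have hdpos : 0 < d := by
    apply div_pos hε
    positivity
  obtain ⟨q0, hq0⟩ := happrox c0 hc0cont d hdpos
  choose qc hqc using fun i => happrox (c i) (hccont i) d hdpos
  refine ⟨q0, qc, fun p hp => ?_⟩
  have hyY : p.2 ∈ Y := hY ▸ ⟨p, hp, rfl⟩
  have hfp : f p = c0 p.2 + ∑ i, c i p.2 * p.1 i := by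
    have := hrep p.2 hyY p.1 (by simpa using hp)
    simpa using this
  have hest : |f p - (MvPolynomial.eval p.2 q0 + ∑ i, MvPolynomial.eval p.2 (qc i) * p.1 i)|
      ≤ |c0 p.2 - MvPolynomial.eval p.2 q0|
        + ∑ i, |c i p.2 - MvPolynomial.eval p.2 (qc i)| * |p.1 i| := by
    rw [hfp]
    have h1 : c0 p.2 + ∑ i, c i p.2 * p.1 i
        - (MvPolynomial.eval p.2 q0 + ∑ i, MvPolynomial.eval p.2 (qc i) * p.1 i)
        = (c0 p.2 - MvPolynomial.eval p.2 q0)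
          + ∑ i, (c i p.2 - MvPolynomial.eval p.2 (qc i)) * p.1 i := by
      rw [Finset.sum_congr rfl (fun i _ => by ring :
        ∀ i ∈ Finset.univ, (c i p.2 - MvPolynomial.eval p.2 (qc i)) * p.1 i
          = c i p.2 * p.1 i - MvPolynomial.eval p.2 (qc i) * p.1 i)]
      rw [Finset.sum_sub_distrib]
      ring
    rw [h1]
    refine (abs_add_le _ _).trans ?_
    gcongr
    refine (Finset.abs_sum_le_sum_abs _ _).trans ?_
    apply Finset.sum_le_sum
    intro i _
    rw [abs_mul]
  have hterm : ∀ i : Fin n, |c i p.2 - MvPolynomial.eval p.2 (qc i)| * |p.1 i| ≤ d * R := by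
    intro i
    apply mul_le_mul (hqc i p.2 hyY).le (hRb p hp i) (abs_nonneg _) hdpos.le
  have hsum : ∑ i : Fin n, |c i p.2 - MvPolynomial.eval p.2 (qc i)| * |p.1 i|
      ≤ (n:ℝ) * (d * R) := by
    calc ∑ i : Fin n, |c i p.2 - MvPolynomial.eval p.2 (qc i)| * |p.1 i|
        ≤ ∑ _i : Fin n, d * R := Finset.sum_le_sum fun i _ => hterm i
      _ = (n:ℝ) * (d * R) := by
          rw [Finset.sum_const, Finset.card_univ, Fintype.card_fin, nsmul_eq_mul]
  have hfinal : |c0 p.2 - MvPolynomial.eval p.2 q0|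
      + ∑ i, |c i p.2 - MvPolynomial.eval p.2 (qc i)| * |p.1 i| < ε := by
    have h1 : |c0 p.2 - MvPolynomial.eval p.2 q0| < d := hq0 p.2 hyY
    have h2 : d + (n:ℝ) * (d * R) ≤ ε / 2 := by
      have hdR : d ≤ d * R := le_mul_of_one_le_right hdpos.le hR1
      have : d * R * ((n:ℝ) + 1) = ε / 2 := by
        rw [hd]
        field_simp
      nlinarith [Nat.cast_nonneg (α := ℝ) n]
    have := hsum
    linarith
  exact lt_of_le_of_lt hest hfinal
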